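/- For every $n\in\mathbb N$, the restriction map $r_n|_{D_n}$ is injective, $r_n(D_n)=r_n(M_{n+1})=f(s_{n+1}B_{\ell_\infty(\Gamma_n)})$, and the inverse map $(r_n|_{D_n})^{-1}:f(s_{n+1}B_{\ell_\infty(\Gamma_n)})\to D_n$ is $(\lambda^2+2\lambda+2)$-Lipschitz. -/

import Mathlib

open Set

noncomputable section

variable {Γ : Type*} [TopologicalSpace Γ] [DiscreteTopology Γ]

/-- `ℓ∞(Γ)`: the Banach space of bounded real functions on `Γ`
(carrying the discrete topology, so that boundedness is the only constraint). -/
abbrev Linf (Γ : Type*) [TopologicalSpace Γ] [DiscreteTopology Γ] : Type _ :=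
  BoundedContinuousFunction Γ ℝ

/-- The entire part of a real number, toward `0`: `[r] = sign(r)⌊|r|⌋`. -/
def ent (r : ℝ) : ℝ := Real.sign r * ⌊|r|⌋

lemma abs_ent_le (r : ℝ) : |ent r| ≤ |r| := by
  have hsign : |Real.sign r| ≤ 1 := by
    rcases lt_trichotomy r 0 with h | h | h
    · rw [Real.sign_of_neg h]; norm_num
    · rw [h, Real.sign_zero]; norm_num
    · rw [Real.sign_of_pos h]; norm_num
  have hfl : |(⌊|r|⌋ : ℝ)| ≤ |r| := by
    rw [abs_of_nonneg (by exact_mod_cast Int.floor_nonneg.mpr (abs_nonneg r))]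
    exact Int.floor_le _
  calc |ent r| = |Real.sign r| * |(⌊|r|⌋ : ℝ)| := abs_mul _ _
    _ ≤ 1 * |r| := mul_le_mul hsign hfl (abs_nonneg _) zero_le_one
    _ = |r| := one_mul _

/-- The coordinatewise quantization `f : ℓ∞(S) → ℓ∞(S)`, `f(x)(γ) = [x(γ)]`. -/
def quant (x : Linf Γ) : Linf Γ :=
  BoundedContinuousFunction.ofNormedAddCommGroup (fun γ => ent (x γ))
    continuous_of_discreteTopology ‖x‖ (fun γ => by
      rw [Real.norm_eq_abs]
      exact (abs_ent_le (x γ)).trans (by simpa using x.norm_coe_le_norm γ))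

/-- Scalar truncation at level `s`. -/
def truncFun (s t : ℝ) : ℝ := if |t| ≤ s then t else s * t / |t|

lemma abs_truncFun_le (s t : ℝ) : |truncFun s t| ≤ max |s| |t| := by
  unfold truncFun
  split_ifs with h
  · exact le_max_right _ _
  · by_cases ht : t = 0
    · simp [ht]
    · have hst : abs (s * t / |t|) = |s| := by
        rw [abs_div, abs_mul, abs_abs, mul_div_assoc, div_self (abs_ne_zero.mpr ht), mul_one]
      rw [hst]; exact le_max_left _ _

/-- The truncation of radius `s`: `T_s(x)(γ) = x(γ)` if `|x(γ)| ≤ s`,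
and `= s·x(γ)/|x(γ)|` otherwise. -/
def trunc (s : ℝ) (x : Linf Γ) : Linf Γ :=
  BoundedContinuousFunction.ofNormedAddCommGroup (fun γ => truncFun s (x γ))
    continuous_of_discreteTopology (max |s| ‖x‖) (fun γ => by
      rw [Real.norm_eq_abs]
      exact (abs_truncFun_le s (x γ)).trans
        (max_le_max le_rfl (by simpa using x.norm_coe_le_norm γ)))

/-- The restriction operator `r_S : ℓ∞(Γ) → ℓ∞(S)`, where `ℓ∞(S)` is identified
isometrically with the subspace of `ℓ∞(Γ)` of functions vanishing off `S`. -/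
def restr (S : Set Γ) (x : Linf Γ) : Linf Γ :=
  BoundedContinuousFunction.ofNormedAddCommGroup (S.indicator x)
    continuous_of_discreteTopology ‖x‖ (fun γ => by
      rw [Real.norm_eq_abs]
      by_cases h : γ ∈ S
      · rw [Set.indicator_of_mem h]
        simpa using x.norm_coe_le_norm γ
      · rw [Set.indicator_of_notMem h]
        simp)

/-- The ball `s·B_{ℓ∞(S)}`, viewed inside `ℓ∞(Γ)`: functions supported on `S`
of norm at most `s`. -/
def suppBall (S : Set Γ) (s : ℝ) : Set (Linf Γ) :=
  {x | (∀ γ ∉ S, x γ = 0) ∧ ‖x‖ ≤ s}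

/-- `chain T a b = T (a+1) ∘ ⋯ ∘ T b` (the identity if `b ≤ a`). -/
def chain {α : Type*} (T : ℕ → α → α) (a b : ℕ) : α → α :=
  Nat.rec id (fun k ih => ih ∘ T (a + k + 1)) (b - a)

/-- Bourgain–Delbaen data on `Γ`: a strictly increasing sequence of nonempty finite
sets `Γs n` (for `n ≥ 1`) with union `Γ`, together with compatible bounded linear
extension operators `i n : ℓ∞(Γ_n) → ℓ∞(Γ)` (realized as operators on `ℓ∞(Γ)`
factoring through the restriction `restr (Γs n)`), with norms bounded by the
positive integer `lam`. -/
structure BD (Γ : Type*) [TopologicalSpace Γ] [DiscreteTopology Γ] where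
  Γs : ℕ → Set Γ
  lam : ℕ
  i : ℕ → Linf Γ →L[ℝ] Linf Γ
  one_le_lam : 1 ≤ lam
  finite : ∀ n, 1 ≤ n → (Γs n).Finite
  nonempty : ∀ n, 1 ≤ n → (Γs n).Nonempty
  ssubset : ∀ n, 1 ≤ n → Γs n ⊂ Γs (n + 1)
  iUnion_eq : ⋃ n ∈ {k : ℕ | 1 ≤ k}, Γs n = Set.univ
  extension : ∀ n, 1 ≤ n → ∀ x : Linf Γ, ∀ γ ∈ Γs n, i n x γ = x γ
  factor : ∀ n, 1 ≤ n → ∀ x : Linf Γ, i n (restr (Γs n) x) = i n x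
  compatible : ∀ n m, 1 ≤ n → n < m → ∀ x : Linf Γ, i m (restr (Γs m) (i n x)) = i n x
  norm_i_le : ∀ n, 1 ≤ n → ‖i n‖ ≤ (lam : ℝ)

namespace BD

/-- `s n = λ^n`. -/
def s (B : BD Γ) (n : ℕ) : ℝ := (B.lam : ℝ) ^ n

/-- The sets `M_n` (with `M_0 = ∅`):
`M_n = M_{n-1} ∪ (f ∘ i_n)(f(s_n B_{ℓ∞(Γ_n)}) \ r_n(M_{n-1}))`. -/
def M (B : BD Γ) : ℕ → Set (Linf Γ)
  | 0 => ∅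
  | n + 1 =>
      M B n ∪
        (fun z => quant (B.i (n + 1) z)) ''
          (quant '' suppBall (B.Γs (n + 1)) (B.s (n + 1)) \ restr (B.Γs (n + 1)) '' M B n)

/-- `M = ⋃ n, M_n`. -/
def Mtot (B : BD Γ) : Set (Linf Γ) := ⋃ n, B.M n

/-- `C_n = (f ∘ i_{n+1} ∘ f ∘ T_{s_{n+1}} ∘ r_{n+1} ∘ i_n)
(f(s_{n+1}B_{ℓ∞(Γ_n)}) \ f(s_n B_{ℓ∞(Γ_n)}))`. -/
def C (B : BD Γ) (n : ℕ) : Set (Linf Γ) :=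
  (fun z => quant (B.i (n + 1) (quant (trunc (B.s (n + 1)) (restr (B.Γs (n + 1)) (B.i n z)))))) ''
    (quant '' suppBall (B.Γs n) (B.s (n + 1)) \ quant '' suppBall (B.Γs n) (B.s n))

/-- `D_n = M_n ∪ C_n`. -/
def D (B : BD Γ) (n : ℕ) : Set (Linf Γ) := B.M n ∪ B.C n

end BD


/-! ### Auxiliary lemmas -/

lemma ent_intCast (k : ℤ) : ent (k : ℝ) = k := by
  unfold ent
  rcases lt_trichotomy (k : ℝ) 0 with h | h | h
  · rw [Real.sign_of_neg h, abs_of_neg h, ← Int.cast_neg, Int.floor_intCast]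
    push_cast; ring
  · have hk : k = 0 := by exact_mod_cast h
    subst hk; simp
  · rw [Real.sign_of_pos h, abs_of_pos h, Int.floor_intCast]; ring

lemma abs_ent_sub_self_le (r : ℝ) : |ent r - r| ≤ 1 := by
  unfold ent
  rcases lt_trichotomy r 0 with h | h | h
  · rw [Real.sign_of_neg h, abs_of_neg h]
    have h1 : (⌊-r⌋ : ℝ) ≤ -r := Int.floor_le _
    have h2 : -r < ⌊-r⌋ + 1 := Int.lt_floor_add_one _
    rw [abs_le]; constructor <;> nlinarith
  · simp [h]
  · rw [Real.sign_of_pos h, abs_of_pos h]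
    have h1 : (⌊r⌋ : ℝ) ≤ r := Int.floor_le _
    have h2 : r < ⌊r⌋ + 1 := Int.lt_floor_add_one _
    rw [abs_le]; constructor <;> nlinarith

lemma quant_apply (x : Linf Γ) (γ : Γ) : quant x γ = ent (x γ) := rfl

lemma restr_apply (S : Set Γ) (x : Linf Γ) (γ : Γ) : restr S x γ = S.indicator x γ := rfl

lemma trunc_apply (s : ℝ) (x : Linf Γ) (γ : Γ) : trunc s x γ = truncFun s (x γ) := rfl

lemma abs_apply_le_norm (x : Linf Γ) (γ : Γ) : |x γ| ≤ ‖x‖ := by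
  simpa using x.norm_coe_le_norm γ

lemma norm_le_iff {s : ℝ} (hs : 0 ≤ s) (x : Linf Γ) : ‖x‖ ≤ s ↔ ∀ γ, |x γ| ≤ s := by
  rw [BoundedContinuousFunction.norm_le hs]
  simp [Real.norm_eq_abs]

/-- A function is integer-valued. -/
def IsInt (x : Linf Γ) : Prop := ∀ γ, ∃ k : ℤ, x γ = k

lemma isInt_quant (x : Linf Γ) : IsInt (quant x) := by
  intro γ
  rw [quant_apply]
  unfold ent
  rcases lt_trichotomy (x γ) 0 with h | h | h
  · exact ⟨-⌊|x γ|⌋, by rw [Real.sign_of_neg h]; push_cast; ring⟩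
  · exact ⟨0, by rw [h]; simp⟩
  · exact ⟨⌊|x γ|⌋, by rw [Real.sign_of_pos h]; ring⟩

lemma quant_eq_self {x : Linf Γ} (h : IsInt x) : quant x = x := by
  ext γ
  rw [quant_apply]
  obtain ⟨k, hk⟩ := h γ
  rw [hk, ent_intCast]

lemma norm_quant_le (x : Linf Γ) : ‖quant x‖ ≤ ‖x‖ := by
  rw [norm_le_iff (norm_nonneg x)]
  intro γ
  rw [quant_apply]
  exact (abs_ent_le _).trans (abs_apply_le_norm x γ)

lemma norm_quant_sub_le (x : Linf Γ) : ‖quant x - x‖ ≤ 1 := by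
  rw [norm_le_iff zero_le_one]
  intro γ
  simpa [quant_apply] using abs_ent_sub_self_le (x γ)

lemma restr_apply_mem {S : Set Γ} (x : Linf Γ) {γ : Γ} (h : γ ∈ S) : restr S x γ = x γ := by
  rw [restr_apply, Set.indicator_of_mem h]

lemma restr_apply_not_mem {S : Set Γ} (x : Linf Γ) {γ : Γ} (h : γ ∉ S) : restr S x γ = 0 := by
  rw [restr_apply, Set.indicator_of_notMem h]

lemma restr_sub (S : Set Γ) (x y : Linf Γ) : restr S (x - y) = restr S x - restr S y := by
  ext γ
  by_cases h : γ ∈ S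
  · simp [restr_apply_mem _ h]
  · simp [restr_apply_not_mem _ h]

lemma restr_quant (S : Set Γ) (x : Linf Γ) : restr S (quant x) = quant (restr S x) := by
  ext γ
  by_cases h : γ ∈ S
  · rw [restr_apply_mem _ h, quant_apply, quant_apply, restr_apply_mem _ h]
  · rw [restr_apply_not_mem _ h, quant_apply, restr_apply_not_mem _ h]
    simp [ent]

lemma restr_restr {S T : Set Γ} (h : S ⊆ T) (x : Linf Γ) :
    restr S (restr T x) = restr S x := by
  ext γ
  by_cases hγ : γ ∈ S
  · rw [restr_apply_mem _ hγ, restr_apply_mem _ hγ, restr_apply_mem _ (h hγ)]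
  · rw [restr_apply_not_mem _ hγ, restr_apply_not_mem _ hγ]

lemma restr_eq_self {S : Set Γ} {x : Linf Γ} (h : ∀ γ ∉ S, x γ = 0) : restr S x = x := by
  ext γ
  by_cases hγ : γ ∈ S
  · exact restr_apply_mem _ hγ
  · rw [restr_apply_not_mem _ hγ, h γ hγ]

lemma norm_restr_le (S : Set Γ) (x : Linf Γ) : ‖restr S x‖ ≤ ‖x‖ := by
  rw [norm_le_iff (norm_nonneg x)]
  intro γ
  by_cases h : γ ∈ S
  · rw [restr_apply_mem _ h]; exact abs_apply_le_norm x γ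
  · rw [restr_apply_not_mem _ h]; simp

lemma isInt_restr {x : Linf Γ} (S : Set Γ) (h : IsInt x) : IsInt (restr S x) := by
  intro γ
  by_cases hγ : γ ∈ S
  · rw [restr_apply_mem _ hγ]; exact h γ
  · exact ⟨0, by rw [restr_apply_not_mem _ hγ]; simp⟩

lemma truncFun_eq_self {s t : ℝ} (h : |t| ≤ s) : truncFun s t = t := if_pos h

lemma trunc_eq_self {s : ℝ} {x : Linf Γ} (h : ∀ γ, |x γ| ≤ s) : trunc s x = x := by
  ext γ
  rw [trunc_apply, truncFun_eq_self (h γ)]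

lemma truncFun_eq_clamp {s : ℝ} (hs : 0 ≤ s) (t : ℝ) :
    truncFun s t = max (-s) (min s t) := by
  unfold truncFun
  split_ifs with h
  · rw [abs_le] at h
    rw [min_eq_right h.2, max_eq_right h.1]
  · push_neg at h
    rcases lt_trichotomy t 0 with ht | ht | ht
    · rw [abs_of_neg ht] at h ⊢
      rw [min_eq_right (by linarith), max_eq_left (by linarith)]
      rw [div_neg, mul_div_assoc, div_self ht.ne, mul_one]
    · exfalso; rw [ht] at h; simp at h; linarith
    · rw [abs_of_pos ht] at h ⊢
      rw [min_eq_left (by linarith), max_eq_right (by linarith)]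
      rw [mul_div_assoc, div_self ht.ne', mul_one]

lemma abs_truncFun_sub_le {s : ℝ} (hs : 0 ≤ s) (a b : ℝ) :
    |truncFun s a - truncFun s b| ≤ |a - b| := by
  rw [truncFun_eq_clamp hs, truncFun_eq_clamp hs]
  have h1 := abs_max_sub_max_le_max (-s) (min s a) (-s) (min s b)
  have h2 := abs_min_sub_min_le_max s a s b
  rw [sub_self, abs_zero] at h1 h2
  rw [max_eq_right (abs_nonneg (min s a - min s b))] at h1
  rw [max_eq_right (abs_nonneg (a - b))] at h2
  exact h1.trans h2

lemma norm_trunc_sub_trunc_le {s : ℝ} (hs : 0 ≤ s) (x y : Linf Γ) :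
    ‖trunc s x - trunc s y‖ ≤ ‖x - y‖ := by
  rw [norm_le_iff (norm_nonneg _)]
  intro γ
  calc |(trunc s x - trunc s y) γ| = |truncFun s (x γ) - truncFun s (y γ)| := by
        simp [trunc_apply]
    _ ≤ |x γ - y γ| := abs_truncFun_sub_le hs _ _
    _ = |(x - y) γ| := by simp
    _ ≤ ‖x - y‖ := abs_apply_le_norm _ γ

lemma mem_quant_suppBall {S : Set Γ} {s : ℝ} {x : Linf Γ} :
    x ∈ quant '' suppBall S s ↔ IsInt x ∧ (∀ γ ∉ S, x γ = 0) ∧ ‖x‖ ≤ s := by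
  constructor
  · rintro ⟨y, ⟨hy0, hys⟩, rfl⟩
    refine ⟨isInt_quant y, fun γ hγ => ?_, (norm_quant_le y).trans hys⟩
    rw [quant_apply, hy0 γ hγ]
    simp [ent]
  · rintro ⟨h1, h2, h3⟩
    exact ⟨x, ⟨h2, h3⟩, quant_eq_self h1⟩

lemma one_le_norm_sub {x y : Linf Γ} (hx : IsInt x) (hy : IsInt y) (hne : x ≠ y) :
    1 ≤ ‖x - y‖ := by
  have hex : ∃ γ, x γ ≠ y γ := by
    by_contra h
    push_neg at h
    exact hne (BoundedContinuousFunction.ext h)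
  obtain ⟨γ, hγ⟩ := hex
  obtain ⟨k, hk⟩ := hx γ
  obtain ⟨l, hl⟩ := hy γ
  have hkl : k ≠ l := by
    intro h; apply hγ; rw [hk, hl, h]
  have h1 : (1 : ℝ) ≤ |x γ - y γ| := by
    rw [hk, hl, ← Int.cast_sub, ← Int.cast_abs]
    exact_mod_cast Int.one_le_abs (sub_ne_zero.mpr hkl)
  calc (1:ℝ) ≤ |x γ - y γ| := h1
    _ = |(x - y) γ| := by simp
    _ ≤ ‖x - y‖ := abs_apply_le_norm _ _

namespace BD

variable (B : BD Γ)

lemma one_le_lamR : (1:ℝ) ≤ (B.lam : ℝ) := by exact_mod_cast B.one_le_lam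

lemma lam_pos : (0:ℝ) < (B.lam : ℝ) := lt_of_lt_of_le zero_lt_one B.one_le_lamR

lemma s_pos (n : ℕ) : 0 < B.s n := pow_pos B.lam_pos n

lemma s_mono {k m : ℕ} (h : k ≤ m) : B.s k ≤ B.s m :=
  pow_le_pow_right₀ B.one_le_lamR h

lemma lam_mul_s (n : ℕ) : (B.lam : ℝ) * B.s n = B.s (n+1) := by
  rw [s, s, pow_succ]; ring

lemma Γs_mono {k m : ℕ} (h1 : 1 ≤ k) (h : k ≤ m) : B.Γs k ⊆ B.Γs m := by
  induction h with
  | refl => exact subset_rfl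
  | @step m hm ih => exact ih.trans (B.ssubset m (h1.trans hm)).subset

lemma norm_i_apply_le {n : ℕ} (hn : 1 ≤ n) (x : Linf Γ) :
    ‖B.i n x‖ ≤ (B.lam : ℝ) * ‖x‖ :=
  le_trans ((B.i n).le_opNorm x)
    (mul_le_mul_of_nonneg_right (B.norm_i_le n hn) (norm_nonneg x))

lemma i_restr_i {k m : ℕ} (h1 : 1 ≤ k) (h : k ≤ m) (x : Linf Γ) :
    B.i m (restr (B.Γs m) (B.i k x)) = B.i k x := by
  rcases h.lt_or_eq with h' | rfl
  · exact B.compatible k m h1 h' x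
  · have heq : restr (B.Γs k) (B.i k x) = restr (B.Γs k) x := by
      ext γ
      by_cases hγ : γ ∈ B.Γs k
      · rw [restr_apply_mem _ hγ, restr_apply_mem _ hγ, B.extension k h1 x γ hγ]
      · rw [restr_apply_not_mem _ hγ, restr_apply_not_mem _ hγ]
    rw [heq, B.factor k h1 x]

lemma M_shape {n : ℕ} {x : Linf Γ} (hx : x ∈ B.M n) :
    ∃ k z, 1 ≤ k ∧ k ≤ n ∧ IsInt z ∧ (∀ γ ∉ B.Γs k, z γ = 0) ∧ ‖z‖ ≤ B.s k ∧
      x = quant (B.i k z) := by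
  induction n with
  | zero => exact absurd hx (Set.notMem_empty x)
  | succ n ih =>
    rw [M, Set.mem_union] at hx
    rcases hx with hx | hx
    · obtain ⟨k, z, h1, h2, h⟩ := ih hx
      exact ⟨k, z, h1, h2.trans (Nat.le_succ n), h⟩
    · obtain ⟨z, hz, rfl⟩ := hx
      rw [Set.mem_diff, mem_quant_suppBall] at hz
      obtain ⟨⟨h1, h2, h3⟩, -⟩ := hz
      exact ⟨n+1, z, by omega, le_refl _, h1, h2, h3, rfl⟩

lemma M_isInt {n : ℕ} {x : Linf Γ} (hx : x ∈ B.M n) : IsInt x := by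
  obtain ⟨k, z, _, _, _, _, _, rfl⟩ := B.M_shape hx
  exact isInt_quant _

lemma M_norm_le {n : ℕ} {x : Linf Γ} (hx : x ∈ B.M n) : ‖x‖ ≤ B.s (n+1) := by
  obtain ⟨k, z, hk1, hkn, _, _, hz, rfl⟩ := B.M_shape hx
  calc ‖quant (B.i k z)‖ ≤ ‖B.i k z‖ := norm_quant_le _
    _ ≤ (B.lam : ℝ) * ‖z‖ := B.norm_i_apply_le hk1 _
    _ ≤ (B.lam : ℝ) * B.s k := mul_le_mul_of_nonneg_left hz B.lam_pos.le
    _ = B.s (k+1) := B.lam_mul_s k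
    _ ≤ B.s (n+1) := B.s_mono (by omega)

lemma restr_quant_i {m : ℕ} (hm : 1 ≤ m) {z : Linf Γ} (hz : IsInt z)
    (hsupp : ∀ γ ∉ B.Γs m, z γ = 0) :
    restr (B.Γs m) (quant (B.i m z)) = z := by
  ext γ
  by_cases hγ : γ ∈ B.Γs m
  · rw [restr_apply_mem _ hγ, quant_apply, B.extension m hm z γ hγ]
    obtain ⟨k, hk⟩ := hz γ
    rw [hk, ent_intCast]
  · rw [restr_apply_not_mem _ hγ, hsupp γ hγ]

lemma injOn_restr_M (n : ℕ) : Set.InjOn (restr (B.Γs n)) (B.M n) := by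
  induction n with
  | zero => intro x hx; exact absurd hx (Set.notMem_empty x)
  | succ n ih =>
    have hA : ∀ z ∈ quant '' suppBall (B.Γs (n+1)) (B.s (n+1)) \
        restr (B.Γs (n+1)) '' B.M n,
        restr (B.Γs (n+1)) (quant (B.i (n+1) z)) = z := by
      intro z hz
      rw [Set.mem_diff, mem_quant_suppBall] at hz
      exact B.restr_quant_i (by omega) hz.1.1 hz.1.2.1
    intro x hx y hy hxy
    rw [M, Set.mem_union] at hx hy
    rcases hx with hx | hx <;> rcases hy with hy | hy
    · rcases Nat.eq_zero_or_pos n with rfl | hn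
      · exact absurd hx (Set.notMem_empty x)
      · have hsub : B.Γs n ⊆ B.Γs (n+1) := (B.ssubset n hn).subset
        apply ih hx hy
        rw [← restr_restr hsub x, ← restr_restr hsub y, hxy]
    · obtain ⟨z, hz, rfl⟩ := hy
      exfalso
      apply hz.2
      beta_reduce at hxy
      rw [← hA z hz, ← hxy]
      exact Set.mem_image_of_mem _ hx
    · obtain ⟨z, hz, rfl⟩ := hx
      exfalso
      apply hz.2
      beta_reduce at hxy
      rw [← hA z hz, hxy]
      exact Set.mem_image_of_mem _ hy
    · obtain ⟨z, hz, rfl⟩ := hx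
      obtain ⟨w, hw, rfl⟩ := hy
      beta_reduce at hxy ⊢
      rw [hA z hz, hA w hw] at hxy
      rw [hxy]

lemma restr_image_M_subset (n : ℕ) :
    restr (B.Γs (n+1)) '' B.M n ⊆ quant '' suppBall (B.Γs (n+1)) (B.s (n+1)) := by
  rintro _ ⟨x, hx, rfl⟩
  rw [mem_quant_suppBall]
  exact ⟨isInt_restr _ (B.M_isInt hx), fun γ hγ => restr_apply_not_mem _ hγ,
    (norm_restr_le _ _).trans (B.M_norm_le hx)⟩

lemma restr_image_M (n : ℕ) :
    restr (B.Γs (n+1)) '' B.M (n+1) = quant '' suppBall (B.Γs (n+1)) (B.s (n+1)) := by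
  have hA : ∀ z ∈ quant '' suppBall (B.Γs (n+1)) (B.s (n+1)) \
      restr (B.Γs (n+1)) '' B.M n,
      restr (B.Γs (n+1)) (quant (B.i (n+1) z)) = z := by
    intro z hz
    rw [Set.mem_diff, mem_quant_suppBall] at hz
    exact B.restr_quant_i (by omega) hz.1.1 hz.1.2.1
  rw [M, Set.image_union]
  have himg : restr (B.Γs (n+1)) '' ((fun z => quant (B.i (n+1) z)) ''
      (quant '' suppBall (B.Γs (n+1)) (B.s (n+1)) \ restr (B.Γs (n+1)) '' B.M n)) =
      quant '' suppBall (B.Γs (n+1)) (B.s (n+1)) \ restr (B.Γs (n+1)) '' B.M n := by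
    ext w
    constructor
    · rintro ⟨-, ⟨z, hz, rfl⟩, rfl⟩
      beta_reduce
      rw [hA z hz]
      exact hz
    · intro hw
      refine ⟨_, ⟨w, hw, rfl⟩, ?_⟩
      beta_reduce
      exact hA w hw
  rw [himg]
  rw [Set.union_diff_cancel (B.restr_image_M_subset n)]

lemma restr_image_M' {n : ℕ} (hn : 1 ≤ n) :
    restr (B.Γs n) '' B.M (n+1) = quant '' suppBall (B.Γs n) (B.s (n+1)) := by
  have hsub : B.Γs n ⊆ B.Γs (n+1) := (B.ssubset n hn).subset
  have h1 : restr (B.Γs n) '' B.M (n+1) =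
      restr (B.Γs n) '' (restr (B.Γs (n+1)) '' B.M (n+1)) := by
    rw [← Set.image_comp]
    apply Set.image_congr
    intro x _
    exact (restr_restr hsub x).symm
  rw [h1, B.restr_image_M n]
  ext z
  constructor
  · rintro ⟨w, hw, rfl⟩
    rw [mem_quant_suppBall] at hw ⊢
    exact ⟨isInt_restr _ hw.1, fun γ hγ => restr_apply_not_mem _ hγ,
      (norm_restr_le _ _).trans hw.2.2⟩
  · intro hz
    rw [mem_quant_suppBall] at hz
    refine ⟨z, ?_, restr_eq_self hz.2.1⟩
    rw [mem_quant_suppBall]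
    exact ⟨hz.1, fun γ hγ => hz.2.1 γ (fun h => hγ (hsub h)), hz.2.2⟩

lemma C_section {n : ℕ} (hn : 1 ≤ n) {z : Linf Γ} (hz : IsInt z)
    (hsupp : ∀ γ ∉ B.Γs n, z γ = 0) (hnorm : ‖z‖ ≤ B.s (n+1)) :
    restr (B.Γs n)
      (quant (B.i (n+1) (quant (trunc (B.s (n+1)) (restr (B.Γs (n+1)) (B.i n z)))))) = z := by
  have hsub : B.Γs n ⊆ B.Γs (n+1) := (B.ssubset n hn).subset
  ext γ
  by_cases hγ : γ ∈ B.Γs n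
  · rw [restr_apply_mem _ hγ, quant_apply,
      B.extension (n+1) (by omega) _ γ (hsub hγ), quant_apply, trunc_apply,
      restr_apply_mem _ (hsub hγ), B.extension n hn z γ hγ,
      truncFun_eq_self ((abs_apply_le_norm z γ).trans hnorm)]
    obtain ⟨k, hk⟩ := hz γ
    rw [hk, ent_intCast, ent_intCast]
  · rw [restr_apply_not_mem _ hγ, hsupp γ hγ]

lemma restr_C_eq {n : ℕ} (hn : 1 ≤ n) {x : Linf Γ} (hx : x ∈ B.C n) :
    restr (B.Γs n) x ∈ quant '' suppBall (B.Γs n) (B.s (n+1)) \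
      quant '' suppBall (B.Γs n) (B.s n) ∧
    x = quant (B.i (n+1) (quant (trunc (B.s (n+1))
      (restr (B.Γs (n+1)) (B.i n (restr (B.Γs n) x)))))) := by
  obtain ⟨z, hz, rfl⟩ := hx
  have hz1 := hz.1
  rw [mem_quant_suppBall] at hz1
  have hres := B.C_section hn hz1.1 hz1.2.1 hz1.2.2
  beta_reduce
  rw [hres]
  exact ⟨hz, rfl⟩

lemma M_approx {n : ℕ} (hn : 1 ≤ n) {x : Linf Γ} (hx : x ∈ B.M n) :
    ‖x - B.i n (restr (B.Γs n) x)‖ ≤ (B.lam : ℝ) + 1 := by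
  obtain ⟨k, z, hk1, hkn, hint, hsupp, hnorm, rfl⟩ := B.M_shape hx
  have h1 : restr (B.Γs n) (quant (B.i k z)) = quant (restr (B.Γs n) (B.i k z)) :=
    restr_quant _ _
  have h2 : B.i n (restr (B.Γs n) (B.i k z)) = B.i k z := B.i_restr_i hk1 hkn z
  set b := restr (B.Γs n) (B.i k z) with hb
  have key : quant (B.i k z) - B.i n (restr (B.Γs n) (quant (B.i k z)))
      = (quant (B.i k z) - B.i k z) - B.i n (quant b - b) := by
    rw [h1, map_sub, h2]
    abel
  rw [key]
  have hq1 : ‖quant (B.i k z) - B.i k z‖ ≤ 1 := norm_quant_sub_le _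
  have hq2 : ‖B.i n (quant b - b)‖ ≤ (B.lam : ℝ) * ‖quant b - b‖ := B.norm_i_apply_le hn _
  have hq3 : ‖quant b - b‖ ≤ 1 := norm_quant_sub_le _
  have hq4 : ‖(quant (B.i k z) - B.i k z) - B.i n (quant b - b)‖ ≤
      ‖quant (B.i k z) - B.i k z‖ + ‖B.i n (quant b - b)‖ := norm_sub_le _ _
  have hlam := B.lam_pos
  nlinarith

lemma D_isInt {n : ℕ} {x : Linf Γ} (hx : x ∈ B.D n) : IsInt x := by
  rcases hx with hx | hx
  · exact B.M_isInt hx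
  · obtain ⟨z, _, rfl⟩ := hx
    exact isInt_quant _

lemma D_approx {n : ℕ} (hn : 1 ≤ n) {x : Linf Γ} (hx : x ∈ B.D n) :
    ‖x - B.i (n+1) (trunc (B.s (n+1)) (restr (B.Γs (n+1)) (B.i n (restr (B.Γs n) x))))‖
      ≤ (B.lam : ℝ) + 1 := by
  rcases hx with hx | hx
  · -- x ∈ M n
    have hu : restr (B.Γs n) x ∈ quant '' suppBall (B.Γs n) (B.s n) := by
      obtain ⟨m, rfl⟩ : ∃ m, n = m + 1 := ⟨n - 1, by omega⟩
      rw [← B.restr_image_M m]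
      exact Set.mem_image_of_mem _ hx
    rw [mem_quant_suppBall] at hu
    have htr : trunc (B.s (n+1)) (restr (B.Γs (n+1)) (B.i n (restr (B.Γs n) x)))
        = restr (B.Γs (n+1)) (B.i n (restr (B.Γs n) x)) := by
      apply trunc_eq_self
      intro γ
      by_cases hγ : γ ∈ B.Γs (n+1)
      · rw [restr_apply_mem _ hγ]
        have hlam := B.lam_pos
        calc |B.i n (restr (B.Γs n) x) γ| ≤ ‖B.i n (restr (B.Γs n) x)‖ :=
              abs_apply_le_norm _ _
          _ ≤ (B.lam : ℝ) * ‖restr (B.Γs n) x‖ := B.norm_i_apply_le hn _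
          _ ≤ (B.lam : ℝ) * B.s n := by nlinarith [hu.2.2]
          _ = B.s (n+1) := B.lam_mul_s n
      · rw [restr_apply_not_mem _ hγ]
        simpa using (B.s_pos (n+1)).le
    rw [htr, B.i_restr_i hn (Nat.le_succ n)]
    exact B.M_approx hn hx
  · -- x ∈ C n
    obtain ⟨hmem, hrepr⟩ := B.restr_C_eq hn hx
    set u := restr (B.Γs n) x with hu
    set a := trunc (B.s (n+1)) (restr (B.Γs (n+1)) (B.i n u)) with ha
    rw [hrepr]
    have key : quant (B.i (n+1) (quant a)) - B.i (n+1) a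
        = (quant (B.i (n+1) (quant a)) - B.i (n+1) (quant a)) + B.i (n+1) (quant a - a) := by
      rw [map_sub]
      abel
    rw [key]
    have hq1 : ‖quant (B.i (n+1) (quant a)) - B.i (n+1) (quant a)‖ ≤ 1 := norm_quant_sub_le _
    have hq2 : ‖B.i (n+1) (quant a - a)‖ ≤ (B.lam : ℝ) * ‖quant a - a‖ :=
      B.norm_i_apply_le (by omega) _
    have hq3 : ‖quant a - a‖ ≤ 1 := norm_quant_sub_le _
    have hq4 := norm_add_le (quant (B.i (n+1) (quant a)) - B.i (n+1) (quant a))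
      (B.i (n+1) (quant a - a))
    have hlam := B.lam_pos
    nlinarith

end BD

/-- Lemma 6 (`Lipmain`): `r_n|_{D_n}` is injective,
`r_n(D_n) = r_n(M_{n+1}) = f(s_{n+1} B_{ℓ∞(Γ_n)})`, and the inverse map
is `(λ² + 2λ + 2)`-Lipschitz. -/
theorem restr_injOn_D (B : BD Γ) (n : ℕ) (hn : 1 ≤ n) :
    Set.InjOn (restr (B.Γs n)) (B.D n) ∧
    restr (B.Γs n) '' B.D n = quant '' suppBall (B.Γs n) (B.s (n + 1)) ∧
    restr (B.Γs n) '' B.M (n + 1) = quant '' suppBall (B.Γs n) (B.s (n + 1)) ∧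
    (∀ x ∈ B.D n, ∀ y ∈ B.D n,
      ‖x - y‖ ≤ ((B.lam : ℝ) ^ 2 + 2 * (B.lam : ℝ) + 2) *
        ‖restr (B.Γs n) x - restr (B.Γs n) y‖) := by
  have hMimg : restr (B.Γs n) '' B.M n = quant '' suppBall (B.Γs n) (B.s n) := by
    obtain ⟨m, rfl⟩ : ∃ m, n = m + 1 := ⟨n - 1, by omega⟩
    exact B.restr_image_M m
  have hCimg : restr (B.Γs n) '' B.C n =
      quant '' suppBall (B.Γs n) (B.s (n+1)) \ quant '' suppBall (B.Γs n) (B.s n) := by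
    ext w
    constructor
    · rintro ⟨x, hx, rfl⟩
      exact (B.restr_C_eq hn hx).1
    · intro hw
      have hw1 := hw.1
      rw [mem_quant_suppBall] at hw1
      have hmem : (fun z => quant (B.i (n + 1) (quant (trunc (B.s (n + 1))
          (restr (B.Γs (n + 1)) (B.i n z)))))) w ∈ B.C n := Set.mem_image_of_mem _ hw
      refine ⟨_, hmem, ?_⟩
      beta_reduce
      exact B.C_section hn hw1.1 hw1.2.1 hw1.2.2
  have hMD : ∀ x ∈ B.M n, restr (B.Γs n) x ∈ quant '' suppBall (B.Γs n) (B.s n) := by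
    intro x hx
    rw [← hMimg]
    exact Set.mem_image_of_mem _ hx
  have hinj : Set.InjOn (restr (B.Γs n)) (B.D n) := by
    intro x hx y hy hxy
    replace hx : x ∈ B.M n ∪ B.C n := hx
    replace hy : y ∈ B.M n ∪ B.C n := hy
    rcases hx with hx | hx <;> rcases hy with hy | hy
    · exact B.injOn_restr_M n hx hy hxy
    · exfalso
      have h1 := hMD x hx
      rw [hxy] at h1
      exact (B.restr_C_eq hn hy).1.2 h1
    · exfalso
      have h1 := hMD y hy
      rw [← hxy] at h1
      exact (B.restr_C_eq hn hx).1.2 h1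
    · have e1 := (B.restr_C_eq hn hx).2
      have e2 := (B.restr_C_eq hn hy).2
      rw [e1, e2, hxy]
  have hsubF : quant '' suppBall (B.Γs n) (B.s n) ⊆
      quant '' suppBall (B.Γs n) (B.s (n+1)) := by
    intro z hz
    rw [mem_quant_suppBall] at hz ⊢
    exact ⟨hz.1, hz.2.1, hz.2.2.trans (B.s_mono (Nat.le_succ n))⟩
  have hDimg : restr (B.Γs n) '' B.D n = quant '' suppBall (B.Γs n) (B.s (n+1)) := by
    have hD : B.D n = B.M n ∪ B.C n := rfl
    rw [hD, Set.image_union, hMimg, hCimg, Set.union_diff_cancel hsubF]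
  refine ⟨hinj, hDimg, B.restr_image_M' hn, ?_⟩
  intro x hx y hy
  by_cases hxy : x = y
  · rw [hxy, sub_self, norm_zero, sub_self, norm_zero, mul_zero]
  · have hd : ∀ w, w ∈ B.D n → IsInt (restr (B.Γs n) w) :=
      fun w hw => isInt_restr _ (B.D_isInt hw)
    have hne : restr (B.Γs n) x ≠ restr (B.Γs n) y := fun h => hxy (hinj hx hy h)
    have h1 : 1 ≤ ‖restr (B.Γs n) x - restr (B.Γs n) y‖ :=
      one_le_norm_sub (hd x hx) (hd y hy) hne
    set u := restr (B.Γs n) x with hu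
    set v := restr (B.Γs n) y with hv
    set gu := B.i (n+1) (trunc (B.s (n+1)) (restr (B.Γs (n+1)) (B.i n u))) with hgu
    set gv := B.i (n+1) (trunc (B.s (n+1)) (restr (B.Γs (n+1)) (B.i n v))) with hgv
    have hxgu : ‖x - gu‖ ≤ (B.lam : ℝ) + 1 := by
      rw [hgu, hu]
      exact B.D_approx hn hx
    have hygv : ‖y - gv‖ ≤ (B.lam : ℝ) + 1 := by
      rw [hgv, hv]
      exact B.D_approx hn hy
    have hmid : ‖gu - gv‖ ≤ (B.lam : ℝ)^2 * ‖u - v‖ := by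
      rw [hgu, hgv, ← map_sub]
      have e1 : ‖trunc (B.s (n+1)) (restr (B.Γs (n+1)) (B.i n u)) -
          trunc (B.s (n+1)) (restr (B.Γs (n+1)) (B.i n v))‖ ≤ ‖B.i n (u - v)‖ := by
        refine (norm_trunc_sub_trunc_le (B.s_pos (n+1)).le _ _).trans ?_
        calc ‖restr (B.Γs (n+1)) (B.i n u) - restr (B.Γs (n+1)) (B.i n v)‖
            = ‖restr (B.Γs (n+1)) (B.i n u - B.i n v)‖ := by rw [restr_sub]
          _ ≤ ‖B.i n u - B.i n v‖ := norm_restr_le _ _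
          _ = ‖B.i n (u - v)‖ := by rw [map_sub]
      calc ‖B.i (n+1) (trunc (B.s (n+1)) (restr (B.Γs (n+1)) (B.i n u)) -
          trunc (B.s (n+1)) (restr (B.Γs (n+1)) (B.i n v)))‖
          ≤ (B.lam : ℝ) * ‖trunc (B.s (n+1)) (restr (B.Γs (n+1)) (B.i n u)) -
            trunc (B.s (n+1)) (restr (B.Γs (n+1)) (B.i n v))‖ :=
            B.norm_i_apply_le (by omega) _
        _ ≤ (B.lam : ℝ) * ‖B.i n (u - v)‖ := mul_le_mul_of_nonneg_left e1 B.lam_pos.le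
        _ ≤ (B.lam : ℝ) * ((B.lam : ℝ) * ‖u - v‖) :=
            mul_le_mul_of_nonneg_left (B.norm_i_apply_le hn _) B.lam_pos.le
        _ = (B.lam : ℝ)^2 * ‖u - v‖ := by ring
    have tri : ‖x - y‖ ≤ ‖x - gu‖ + ‖gu - gv‖ + ‖y - gv‖ := by
      have heq : x - y = (x - gu) + (gu - gv) + -(y - gv) := by abel
      calc ‖x - y‖ = ‖(x - gu) + (gu - gv) + -(y - gv)‖ := by rw [← heq]
        _ ≤ ‖(x - gu) + (gu - gv)‖ + ‖-(y - gv)‖ := norm_add_le _ _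
        _ ≤ ‖x - gu‖ + ‖gu - gv‖ + ‖y - gv‖ := by
            rw [norm_neg]
            exact add_le_add (norm_add_le _ _) le_rfl
    have hlam := B.one_le_lamR
    have hnn : (0:ℝ) ≤ ‖u - v‖ := norm_nonneg _
    nlinarith [hmid, hxgu, hygv, tri, h1]
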